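/- Let g(Λ) = √((40 − 20 cos Λ − 20 cos²Λ) / (16 + 13 cos Λ + cos²Λ)). Then g(Λ) = Λ + (1/1440)Λ⁵ + O(Λ⁷) as Λ → 0⁺. -/

import Mathlib

open Real Filter Asymptotics Topology

section aux
open Finset Complex

lemma cos_bound8 {x : ℝ} (hx : |x| ≤ 1) :
    |Real.cos x - (1 - x^2/2 + x^4/24 - x^6/720)| ≤ |x|^8 * (1/4000) := by
  have hb1 := Complex.exp_bound (x := x * Complex.I) (by simpa) (n := 8) (by norm_num)
  have hb2 := Complex.exp_bound (x := -x * Complex.I) (by simpa) (n := 8) (by norm_num)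
  have hI6 : (Complex.I)^6 = -1 := by
    rw [show 6 = 2*3 from rfl, pow_mul, Complex.I_sq]; norm_num
  have hs : (∑ m ∈ range 8, (x*Complex.I)^m / m.factorial) +
      ∑ m ∈ range 8, ((-x:ℂ)*Complex.I)^m / m.factorial
      = 2*(1 - (x:ℂ)^2/2 + (x:ℂ)^4/24 - (x:ℂ)^6/720) := by
    simp [Finset.sum_range_succ, Nat.factorial]
    ring_nf
    rw [hI6, show (Complex.I)^4 = 1 from by rw [show 4=2*2 from rfl, pow_mul, Complex.I_sq]; norm_num, Complex.I_sq]; ring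
  have hcos : (Real.cos x - (1 - x^2/2 + x^4/24 - x^6/720) : ℂ)
      = ((Complex.exp (x*Complex.I) - ∑ m ∈ range 8, (x*Complex.I)^m / m.factorial) +
         (Complex.exp ((-x:ℂ)*Complex.I) - ∑ m ∈ range 8, ((-x:ℂ)*Complex.I)^m / m.factorial)) / 2 := by
    rw [sub_add_sub_comm, hs]
    rw [show ((Real.cos x : ℂ)) = Complex.cos x by push_cast [Complex.ofReal_cos]; rfl]
    rw [Complex.cos]
    push_cast
    ring
  have habs : |Real.cos x - (1 - x^2/2 + x^4/24 - x^6/720)|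
      = ‖((Real.cos x - (1 - x^2/2 + x^4/24 - x^6/720) : ℝ) : ℂ)‖ := by
    rw [Complex.norm_real, Real.norm_eq_abs]
  rw [habs]
  push_cast at hcos ⊢
  rw [hcos, norm_div]
  have := (norm_add_le (Complex.exp (x*Complex.I) - ∑ m ∈ range 8, (x*Complex.I)^m / m.factorial)
    (Complex.exp ((-x:ℂ)*Complex.I) - ∑ m ∈ range 8, ((-x:ℂ)*Complex.I)^m / m.factorial))
  have hax : ‖(x:ℂ) * Complex.I‖ = |x| := by simp
  have hax' : ‖(-x:ℂ) * Complex.I‖ = |x| := by simp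
  rw [hax] at hb1
  rw [hax'] at hb2
  have h8 : ((Nat.succ 8 : ℝ) * ((Nat.factorial 8 : ℝ) * (8:ℝ))⁻¹) ≤ 1/8000 := by
    norm_num [Nat.factorial]
  rw [show ‖(2:ℂ)‖ = (2:ℝ) by norm_num]
  have hmul : |x|^8 * ((Nat.succ 8 : ℝ) * ((Nat.factorial 8 : ℝ) * (8:ℝ))⁻¹) ≤ |x|^8 * (1/8000) :=
    mul_le_mul_of_nonneg_left h8 (pow_nonneg (abs_nonneg x) 8)
  norm_num [Nat.factorial] at hb1 hb2
  simp only [neg_mul] at this ⊢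
  have hp8 : (0:ℝ) ≤ |x|^8 := pow_nonneg (abs_nonneg x) 8
  linarith

end aux

set_option maxHeartbeats 1600000

/-- Spectrum expansion for quadratic IGA with full Gauss quadrature G₃:
√(λ̃^{2,h}_{G₃}) h = Λ + (1/1440)Λ⁵ + O(Λ⁷) as Λ → 0⁺. -/
theorem stmt15 :
    (fun Λ : ℝ =>
        Real.sqrt ((40 - 20 * Real.cos Λ - 20 * Real.cos Λ ^ 2) /
          (16 + 13 * Real.cos Λ + Real.cos Λ ^ 2))
        - (Λ + (1/1440) * Λ^5)) =O[𝓝[>] (0:ℝ)] (fun Λ => Λ^7) := by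
  rw [Asymptotics.isBigO_iff]
  refine ⟨1, ?_⟩
  filter_upwards [Ioo_mem_nhdsGT_of_mem (by norm_num : (0:ℝ) ∈ Set.Ico (0:ℝ) 1)] with Λ hΛ
  obtain ⟨h0, h1⟩ := hΛ
  have h0' : (0:ℝ) ≤ Λ := h0.le
  have hEb : |Real.cos Λ - (1 - Λ^2/2 + Λ^4/24 - Λ^6/720)| ≤ |Λ|^8 * (1/4000) :=
    cos_bound8 (by rw [abs_of_pos h0]; linarith)
  rw [abs_of_pos h0] at hEb
  set E := Real.cos Λ - (1 - Λ^2/2 + Λ^4/24 - Λ^6/720) with hEdef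
  set c := Real.cos Λ with hc
  have hcE : c = (1 - Λ^2/2 + Λ^4/24 - Λ^6/720) + E := by rw [hEdef]; ring
  have hmono : ∀ k l : ℕ, k ≤ l → Λ^l ≤ Λ^k := fun k l h => pow_le_pow_of_le_one h0' h1.le h
  have hpos : ∀ k : ℕ, (0:ℝ) ≤ Λ^k := fun k => pow_nonneg h0' k
  have hp1 : ∀ k : ℕ, Λ^k ≤ 1 := fun k => by
    calc Λ^k ≤ Λ^0 := hmono 0 k (Nat.zero_le k)
    _ = 1 := pow_zero Λ
  set p := Λ + (1/1440)*Λ^5 with hpdef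
  set N := (40:ℝ) - 20*c - 20*c^2 with hNdef
  set D := (16:ℝ) + 13*c + c^2 with hDdef
  set P := ((1/96)*Λ^8 - (47/23040)*Λ^10 + (139/829440)*Λ^12 - (37/5529600)*Λ^14
        + (19/99532800)*Λ^16 - (1/238878720)*Λ^18 + (1/17915904000)*Λ^20
        - (1/1074954240000)*Λ^22) with hPdef
  set A := (-60 + 5*Λ^2 - (2/3)*Λ^4 - (7/144)*Λ^6 + (1/240)*Λ^8 - (17/138240)*Λ^10
        + (1/230400)*Λ^12 - (1/24883200)*Λ^14 + (1/746496000)*Λ^16) with hAdef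
  set B := (-20 - Λ^2 - (1/720)*Λ^6 - (1/2073600)*Λ^10 : ℝ) with hBdef
  have hc1 : c ≤ 1 := Real.cos_le_one Λ
  have hcm : -1 ≤ c := Real.neg_one_le_cos Λ
  have hD4 : (4:ℝ) ≤ D := by
    have hq : (0:ℝ) ≤ (c+1)*(c+12) := mul_nonneg (by linarith) (by linarith)
    have he : (c+1)*(c+12) = c^2 + 13*c + 12 := by ring
    rw [hDdef]; linarith
  have hDpos : (0:ℝ) < D := by linarith
  have hN0 : (0:ℝ) ≤ N := by
    have hq : (0:ℝ) ≤ 20*((c+2)*(1-c)) :=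
      mul_nonneg (by norm_num) (mul_nonneg (by linarith) (by linarith))
    have he : 20*((c+2)*(1-c)) = 40 - 20*c - 20*c^2 := by ring
    rw [hNdef]; linarith
  have hid : N - D*p^2 = P + E*A + E^2*B := by
    rw [hNdef, hDdef, hpdef, hcE, hPdef, hAdef, hBdef]; ring
  have e10 := hmono 8 10 (by norm_num)
  have e12 := hmono 8 12 (by norm_num)
  have e14 := hmono 8 14 (by norm_num)
  have e16 := hmono 8 16 (by norm_num)
  have e18 := hmono 8 18 (by norm_num)
  have e20 := hmono 8 20 (by norm_num)
  have e22 := hmono 8 22 (by norm_num)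
  have hPb : |P| ≤ (1/50)*Λ^8 := by
    rw [hPdef, abs_le]
    constructor <;>
      linarith [hpos 8, hpos 10, hpos 12, hpos 14, hpos 16, hpos 18, hpos 20, hpos 22]
  have hAb : |A| ≤ 66 := by
    rw [hAdef, abs_le]
    constructor <;>
      linarith [hpos 2, hpos 4, hpos 6, hpos 8, hpos 10, hpos 12, hpos 14, hpos 16,
        hp1 2, hp1 4, hp1 6, hp1 8, hp1 10, hp1 12, hp1 14, hp1 16]
  have hBb : |B| ≤ 22 := by
    rw [hBdef, abs_le]
    constructor <;> linarith [hpos 2, hpos 6, hpos 10, hp1 2, hp1 6, hp1 10]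
  have hE1 : |E| ≤ 1 := hEb.trans (by linarith [hp1 8])
  have hNDb : |N - D*p^2| ≤ Λ^8 := by
    rw [hid]
    have t0 := abs_add_le (P + E*A) (E^2*B)
    have t1 := abs_add_le P (E*A)
    rw [abs_mul, _root_.abs_pow] at t0
    rw [abs_mul] at t1
    have u1 : |E| * |A| ≤ (Λ^8*(1/4000))*66 :=
      mul_le_mul hEb hAb (abs_nonneg _) (by positivity)
    have hE2 : |E|^2 ≤ Λ^8*(1/4000) := by
      have h6 : |E| * |E| ≤ 1 * |E| := mul_le_mul_of_nonneg_right hE1 (abs_nonneg E)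
      calc |E|^2 = |E| * |E| := by ring
      _ ≤ 1 * |E| := h6
      _ = |E| := one_mul _
      _ ≤ Λ^8*(1/4000) := hEb
    have u2 : |E|^2 * |B| ≤ (Λ^8*(1/4000))*22 :=
      mul_le_mul hE2 hBb (abs_nonneg _) (by positivity)
    linarith [hpos 8]
  set f := N / D with hfdef
  have hf0 : (0:ℝ) ≤ f := div_nonneg hN0 hDpos.le
  have hfd : f - p^2 = (N - D*p^2)/D := by rw [hfdef]; field_simp
  have hfb : |f - p^2| ≤ (1/4)*Λ^8 := by
    rw [hfd, abs_div, abs_of_pos hDpos]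
    calc |N - D*p^2| / D ≤ Λ^8 / D := by gcongr
    _ ≤ Λ^8 / 4 := by gcongr
    _ = (1/4)*Λ^8 := by ring
  have hpL : Λ ≤ p := by rw [hpdef]; linarith [hpos 5]
  have hs0 : (0:ℝ) ≤ Real.sqrt f := Real.sqrt_nonneg f
  have hsum : Λ ≤ Real.sqrt f + p := by linarith
  have hdiff : (Real.sqrt f - p) * (Real.sqrt f + p) = f - p^2 := by
    have hsq : Real.sqrt f ^ 2 = f := Real.sq_sqrt hf0
    calc (Real.sqrt f - p) * (Real.sqrt f + p) = Real.sqrt f ^ 2 - p^2 := by ring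
    _ = f - p^2 := by rw [hsq]
  have key : |Real.sqrt f - p| ≤ (1/4)*Λ^7 := by
    have h2 : |Real.sqrt f - p| * (Real.sqrt f + p) = |f - p^2| := by
      rw [← hdiff, abs_mul, _root_.abs_of_nonneg (by linarith : (0:ℝ) ≤ Real.sqrt f + p)]
    have h3 : |Real.sqrt f - p| * Λ ≤ ((1/4)*Λ^7) * Λ := by
      have := mul_le_mul_of_nonneg_left hsum (abs_nonneg (Real.sqrt f - p))
      have h4 : ((1/4)*Λ^7) * Λ = (1/4)*Λ^8 := by ring
      rw [h2] at this
      linarith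
    exact le_of_mul_le_mul_right h3 h0
  rw [Real.norm_eq_abs, Real.norm_eq_abs, one_mul, _root_.abs_of_nonneg (hpos 7)]
  linarith [key, hpos 7]
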